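/- With the setup of the appendix, for every φ ∈ ℝ: u_Rᵀ·R_R(π+φ)·R_L(π+φ)·Ω_L·Ω_R·u_L = -4 r² (1-r²) cos φ, and u_Rᵀ·R_L(π+φ)·Ω_R²·u_L = 4 r² (1-r²)(1-2r²)(1 + cos φ). -/

import Mathlib

attribute [local instance] Matrix.linftyOpNormedAddCommGroup Matrix.linftyOpNormedRing Matrix.linftyOpNormedAlgebra Matrix.linftyOpNormedSpace

open Matrix Real

theorem rodrigues (Ω : Matrix (Fin 3) (Fin 3) ℝ) (h3 : Ω * Ω * Ω = -Ω) (θ : ℝ) :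
    NormedSpace.exp (θ • Ω) =
      1 + Real.sin θ • Ω + (1 - Real.cos θ) • (Ω * Ω) := by
  set A : ℝ → Matrix (Fin 3) (Fin 3) ℝ :=
    fun t => 1 + Real.sin t • Ω + (1 - Real.cos t) • (Ω * Ω) with hA
  have hcomm : ∀ t : ℝ, Commute (t • (-Ω)) Ω := fun t => by
    apply Commute.smul_left; exact (Commute.refl Ω).neg_left
  have hEc : ∀ t : ℝ, NormedSpace.exp (t • (-Ω)) * Ω = Ω * NormedSpace.exp (t • (-Ω)) :=
    fun t => ((hcomm t).exp_left).eq
  have hderiv : ∀ t, HasDerivAt (fun s => A s * NormedSpace.exp (s • (-Ω))) 0 t := by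
    intro t
    have hE := hasDerivAt_exp_smul_const (𝕂 := ℝ) (-Ω) t
    have h1 : HasDerivAt (fun s => Real.sin s • Ω) (Real.cos t • Ω) t :=
      (Real.hasDerivAt_sin t).smul_const Ω
    have h2 : HasDerivAt (fun s => (1 - Real.cos s) • (Ω * Ω)) (Real.sin t • (Ω * Ω)) t := by
      have := ((hasDerivAt_const t (1 : ℝ)).sub (Real.hasDerivAt_cos t)).smul_const (Ω * Ω)
      exact this.congr_deriv (by simp)
    have hA' : HasDerivAt A (Real.cos t • Ω + Real.sin t • (Ω * Ω)) t := by
      have := ((hasDerivAt_const t (1 : Matrix (Fin 3) (Fin 3) ℝ)).add h1).add h2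
      have e : A = ((fun _ => (1 : Matrix (Fin 3) (Fin 3) ℝ)) + fun s => Real.sin s • Ω) +
          fun s => (1 - Real.cos s) • (Ω * Ω) := by funext s; simp [hA]
      rw [e]; exact this.congr_deriv (by simp)
    have := hA'.mul hE
    refine this.congr_deriv ?_
    have key : (Real.cos t • Ω + Real.sin t • (Ω * Ω)) = A t * Ω := by
      simp only [hA]
      rw [add_mul, add_mul, one_mul, smul_mul_assoc, smul_mul_assoc, h3]
      module
    have h4 : NormedSpace.exp (t • (-Ω)) * (-Ω) = -(Ω * NormedSpace.exp (t • (-Ω))) := by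
      rw [mul_neg, hEc]
    rw [key]
    have h5 : A t * Ω * NormedSpace.exp (t • (-Ω)) + A t * (NormedSpace.exp (t • (-Ω)) * (-Ω)) = 0 := by
      rw [h4, mul_neg, mul_assoc]
      abel
    exact h5
  have hconst : ∀ t, A t * NormedSpace.exp (t • (-Ω)) = 1 := by
    intro t
    have := is_const_of_deriv_eq_zero (f := fun s => A s * NormedSpace.exp (s • (-Ω)))
      (fun s => (hderiv s).differentiableAt) (fun s => (hderiv s).deriv) t 0
    simpa [hA] using this
  have hinv : NormedSpace.exp (θ • (-Ω)) * NormedSpace.exp (θ • Ω) = 1 := by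
    refine Eq.trans (NormedSpace.exp_add_of_commute ?_).symm ?_
    · exact (hcomm θ).smul_right θ
    · simp
  calc NormedSpace.exp (θ • Ω)
      = (A θ * NormedSpace.exp (θ • (-Ω))) * NormedSpace.exp (θ • Ω) := by
        rw [hconst]; simp
    _ = A θ := by rw [mul_assoc, hinv, mul_one]

theorem stmt_16 (r : ℝ) (hr : r ∈ Set.Ioo (0:ℝ) 1) (φ : ℝ) :
    let kx : ℝ := Real.sqrt (1 - r ^ 2)
    let ΩL : Matrix (Fin 3) (Fin 3) ℝ := !![0, r, 0; -r, 0, kx; 0, -kx, 0]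
    let ΩR : Matrix (Fin 3) (Fin 3) ℝ := !![0, r, 0; -r, 0, -kx; 0, kx, 0]
    let uL : Fin 3 → ℝ := ![kx, 0, r]
    let uR : Fin 3 → ℝ := ![-kx, 0, r]
    let RL : ℝ → Matrix (Fin 3) (Fin 3) ℝ := fun θ => NormedSpace.exp (θ • ΩL)
    let RR : ℝ → Matrix (Fin 3) (Fin 3) ℝ := fun θ => NormedSpace.exp (θ • ΩR)
    uR ⬝ᵥ (RR (π + φ) * RL (π + φ) * ΩL * ΩR).mulVec uL
      = -(4 * r ^ 2 * (1 - r ^ 2)) * Real.cos φ ∧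
    uR ⬝ᵥ (RL (π + φ) * ΩR * ΩR).mulVec uL
      = 4 * r ^ 2 * (1 - r ^ 2) * (1 - 2 * r ^ 2) * (1 + Real.cos φ) := by
  intro kx ΩL ΩR uL uR RL RR
  have hkx : kx ^ 2 = 1 - r ^ 2 := by
    simp only [kx]
    rw [sq_sqrt]
    nlinarith [hr.1, hr.2]
  have hone : r ^ 2 + kx ^ 2 = 1 := by linarith [hkx]
  have h3L : ΩL * ΩL * ΩL = -ΩL := by
    have h : ΩL * ΩL * ΩL = -((r ^ 2 + kx ^ 2) • ΩL) := by
      ext i j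
      fin_cases i <;> fin_cases j <;>
        simp [ΩL, Matrix.mul_apply, Fin.sum_univ_three] <;> ring
    rw [h, hone, one_smul]
  have h3R : ΩR * ΩR * ΩR = -ΩR := by
    have h : ΩR * ΩR * ΩR = -((r ^ 2 + kx ^ 2) • ΩR) := by
      ext i j
      fin_cases i <;> fin_cases j <;>
        simp [ΩR, Matrix.mul_apply, Fin.sum_univ_three] <;> ring
    rw [h, hone, one_smul]
  have hs : Real.sin (π + φ) = -Real.sin φ := by simp [Real.sin_add]
  have hc : Real.cos (π + φ) = -Real.cos φ := by simp [Real.cos_add]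
  have hRL : RL (π + φ) = 1 + (-Real.sin φ) • ΩL + (1 + Real.cos φ) • (ΩL * ΩL) := by
    simp only [RL]
    rw [rodrigues ΩL h3L, hs, hc]; ring_nf
  have hRR : RR (π + φ) = 1 + (-Real.sin φ) • ΩR + (1 + Real.cos φ) • (ΩR * ΩR) := by
    simp only [RR]
    rw [rodrigues ΩR h3R, hs, hc]; ring_nf
  rw [hRL, hRR]
  constructor
  · simp only [ΩL, ΩR, uL, uR, Matrix.mulVec, dotProduct, Matrix.mul_apply,
      Matrix.add_apply, Matrix.smul_apply, Matrix.one_apply, Fin.sum_univ_three,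
      Matrix.cons_val', Matrix.cons_val_zero, Matrix.cons_val_one, Matrix.head_cons,
      Matrix.head_fin_const, Matrix.empty_val', Matrix.cons_val_fin_one, smul_eq_mul,
      Fin.isValue, Matrix.of_apply, Matrix.cons_val_two, Matrix.tail_cons, Matrix.cons_val, Fin.reduceEq, if_true, if_false]
    norm_num
    linear_combination (-4*Real.cos φ*r^2 - 4*kx^2*r^2 - 4*kx^2*Real.cos φ*r^2) * hkx
  · simp only [ΩL, ΩR, uL, uR, Matrix.mulVec, dotProduct, Matrix.mul_apply,
      Matrix.add_apply, Matrix.smul_apply, Matrix.one_apply, Fin.sum_univ_three,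
      Matrix.cons_val', Matrix.cons_val_zero, Matrix.cons_val_one, Matrix.head_cons,
      Matrix.head_fin_const, Matrix.empty_val', Matrix.cons_val_fin_one, smul_eq_mul,
      Fin.isValue, Matrix.of_apply, Matrix.cons_val_two, Matrix.tail_cons, Matrix.cons_val, Fin.reduceEq, if_true, if_false]
    norm_num
    linear_combination (4*r^2 - 8*r^4 + 4*Real.cos φ*r^2 - 8*Real.cos φ*r^4
      + 4*kx^2*r^2 + 4*kx^2*Real.cos φ*r^2) * hkx
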